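/- Let X and Y be disjoint Hausdorff spaces, p : X → Y × [0, +∞) a continuous map, and f : X → Y the composition of p with the projection to Y. Let X ⊕ Y denote Whyburn's unified space: the set X ⊔ Y topologized so that V is open iff V ∩ X and V ∩ Y are open and for every compact K ⊆ V ∩ Y, the set f⁻¹(K) ∩ (X \ V) is compact. Then the identity map from X ⊕ Y to the teardrop X ∪_p Y is continuous if and only if p is proper. -/

import Mathlib

open Topology Set

/-- The collapse map of the teardrop `X ∪_p Y` (modelled in `Y × EReal`). -/
noncomputable def teardropCollapse {X Y : Type*} (p : X → Y × ℝ) : X ⊕ Y → Y × EReal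
  | Sum.inl x => ((p x).1, ((p x).2 : EReal))
  | Sum.inr y => (y, ⊤)

/-- The teardrop topology on `X ⊔ Y`. -/
def teardropTop {X Y : Type*} [TopologicalSpace X] [TopologicalSpace Y]
    (p : X → Y × ℝ) : TopologicalSpace (X ⊕ Y) :=
  TopologicalSpace.generateFrom
    ({S | ∃ U : Set X, IsOpen U ∧ S = Sum.inl '' U} ∪
     {S | ∃ V : Set (Y × EReal), IsOpen V ∧ S = teardropCollapse p ⁻¹' V})

/-- Whyburn's openness condition for the unified space `X ⊕ Y` attached to
`f : X → Y`: `V` is open iff `V ∩ X` and `V ∩ Y` are open and for every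
compact `K ⊆ V ∩ Y`, the set `f⁻¹(K) ∩ (X \ V)` is compact. -/
def WhyburnOpen {X Y : Type*} [TopologicalSpace X] [TopologicalSpace Y]
    (f : X → Y) (V : Set (X ⊕ Y)) : Prop :=
  IsOpen (Sum.inl ⁻¹' V) ∧ IsOpen (Sum.inr ⁻¹' V) ∧
    ∀ K : Set Y, K ⊆ Sum.inr ⁻¹' V → IsCompact K →
      IsCompact (f ⁻¹' K ∩ (Sum.inl ⁻¹' V)ᶜ)

/-- Proposition 3.16: for disjoint Hausdorff `X`, `Y` and continuous
`p : X → Y × [0, +∞)` with `f = proj_Y ∘ p`, the identity from Whyburn's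
unified space `X ⊕ Y` to the teardrop `X ∪_p Y` is continuous iff `p` is
proper. (Continuity of the identity means every teardrop-open set is open in
the unified space.) -/
theorem unified_to_teardrop_continuous_iff_proper
    {X Y : Type*} [TopologicalSpace X] [TopologicalSpace Y]
    [T2Space X] [T2Space Y]
    (p : X → Y × ℝ) (hp : Continuous p) (hnonneg : ∀ x, 0 ≤ (p x).2) :
    (∀ W : Set (X ⊕ Y), IsOpen[teardropTop p] W →
        WhyburnOpen (fun x => (p x).1) W) ↔
      ∀ K : Set (Y × ℝ), IsCompact K → IsCompact (p ⁻¹' K) := by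
  classical
  have hfc : Continuous fun x => (p x).1 := hp.fst
  constructor
  · -- continuity of id implies proper
    intro h K hK
    obtain ⟨M, hM⟩ := (hK.image continuous_snd).bddAbove
    have hVopen : IsOpen ((univ : Set Y) ×ˢ Ioi (M : EReal)) := isOpen_univ.prod isOpen_Ioi
    have hW : IsOpen[teardropTop p]
        (teardropCollapse p ⁻¹' ((univ : Set Y) ×ˢ Ioi (M : EReal))) :=
      TopologicalSpace.GenerateOpen.basic _ (Or.inr ⟨_, hVopen, rfl⟩)
    obtain ⟨-, -, h3⟩ := h _ hW
    have hK1 : IsCompact (Prod.fst '' K) := hK.image continuous_fst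
    have hsub : Prod.fst '' K ⊆
        Sum.inr ⁻¹' (teardropCollapse p ⁻¹' ((univ : Set Y) ×ˢ Ioi (M : EReal))) := by
      intro y _
      simp only [mem_preimage, teardropCollapse, mem_prod, mem_univ, mem_Ioi, true_and]
      exact lt_top_iff_ne_top.2 (EReal.coe_ne_top M)
    have hC := h3 _ hsub hK1
    refine hC.of_isClosed_subset (hK.isClosed.preimage hp) ?_
    intro x hx
    refine ⟨⟨p x, hx, rfl⟩, ?_⟩
    simp only [mem_compl_iff, mem_preimage, teardropCollapse, mem_prod, mem_univ, mem_Ioi,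
      true_and]
    have : (p x).2 ≤ M := hM ⟨p x, hx, rfl⟩
    exact not_lt.2 (EReal.coe_le_coe_iff.2 this)
  · -- proper implies continuity of id
    intro hproper W hW
    induction hW with
    | basic S hS =>
      rcases hS with ⟨U, hU, rfl⟩ | ⟨V, hV, rfl⟩
      · refine ⟨by rwa [preimage_image_eq _ Sum.inl_injective], ?_, ?_⟩
        · have : Sum.inr ⁻¹' (Sum.inl '' U) = (∅ : Set Y) := by
            ext y; simp
          rw [this]; exact isOpen_empty
        · intro K hKsub hK
          have hKe : K = ∅ := by
            apply eq_empty_of_subset_empty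
            intro y hy
            have := hKsub hy
            simp at this
          subst hKe
          simp only [preimage_empty, empty_inter]
          exact isCompact_empty
      · -- the interesting generator
        have h1 : IsOpen (Sum.inl ⁻¹' (teardropCollapse p ⁻¹' V)) := by
          have : Sum.inl ⁻¹' (teardropCollapse p ⁻¹' V) =
              (fun x => ((p x).1, ((p x).2 : EReal))) ⁻¹' V := rfl
          rw [this]
          exact hV.preimage (hp.fst.prodMk (continuous_coe_real_ereal.comp hp.snd))
        have h2 : IsOpen (Sum.inr ⁻¹' (teardropCollapse p ⁻¹' V)) := by
          have : Sum.inr ⁻¹' (teardropCollapse p ⁻¹' V) =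
              (fun y => (y, (⊤ : EReal))) ⁻¹' V := rfl
          rw [this]
          exact hV.preimage (continuous_id.prodMk continuous_const)
        refine ⟨h1, h2, ?_⟩
        intro K hKsub hK
        have htube : K ×ˢ ({⊤} : Set EReal) ⊆ V := by
          rintro ⟨y, t⟩ ⟨hy, ht⟩
          rcases ht with rfl
          exact hKsub hy
        obtain ⟨u, v, hu, hv, hKu, htv, huv⟩ :=
          generalized_tube_lemma hK isCompact_singleton hV htube
        have hvmem : v ∈ 𝓝 (⊤ : EReal) := hv.mem_nhds (htv rfl)
        obtain ⟨a, ha, hav⟩ := exists_Ioc_subset_of_mem_nhds hvmem ⟨⊥, bot_lt_top⟩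
        obtain ⟨M, haM, hM⟩ := EReal.lt_iff_exists_real_btwn.1 ha
        have hKM : IsCompact (K ×ˢ Icc (0 : ℝ) M) := hK.prod isCompact_Icc
        have hsubset : (fun x => (p x).1) ⁻¹' K ∩
            (Sum.inl ⁻¹' (teardropCollapse p ⁻¹' V))ᶜ ⊆ p ⁻¹' (K ×ˢ Icc (0 : ℝ) M) := by
          rintro x ⟨hx1, hx2⟩
          refine ⟨hx1, hnonneg x, ?_⟩
          by_contra hgt
          push_neg at hgt
          apply hx2
          show ((p x).1, ((p x).2 : EReal)) ∈ V
          apply huv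
          refine ⟨hKu hx1, hav ⟨?_, le_top⟩⟩
          exact haM.trans (EReal.coe_lt_coe_iff.2 hgt)
        refine (hproper _ hKM).of_isClosed_subset ?_ hsubset
        exact ((hK.isClosed.preimage hfc).inter h1.isClosed_compl)
    | univ =>
      refine ⟨isOpen_univ, isOpen_univ, ?_⟩
      intro K _ _
      simp only [preimage_univ, compl_univ, inter_empty]
      exact isCompact_empty
    | inter S T _ _ ihS ihT =>
      refine ⟨ihS.1.inter ihT.1, ihS.2.1.inter ihT.2.1, ?_⟩
      intro K hKsub hK
      have : (fun x => (p x).1) ⁻¹' K ∩ (Sum.inl ⁻¹' (S ∩ T))ᶜ =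
          ((fun x => (p x).1) ⁻¹' K ∩ (Sum.inl ⁻¹' S)ᶜ) ∪
          ((fun x => (p x).1) ⁻¹' K ∩ (Sum.inl ⁻¹' T)ᶜ) := by
        rw [preimage_inter, compl_inter, inter_union_distrib_left]
      rw [this]
      exact (ihS.2.2 K (fun y hy => (hKsub hy).1) hK).union
        (ihT.2.2 K (fun y hy => (hKsub hy).2) hK)
    | sUnion T hT ih =>
      have h1 : IsOpen (Sum.inl ⁻¹' ⋃₀ T) := by
        rw [preimage_sUnion]
        exact isOpen_biUnion fun t ht => (ih t ht).1
      have h2 : IsOpen (Sum.inr ⁻¹' ⋃₀ T) := by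
        rw [preimage_sUnion]
        exact isOpen_biUnion fun t ht => (ih t ht).2.1
      refine ⟨h1, h2, ?_⟩
      intro K hKsub hK
      have hcover : K ⊆ ⋃ t ∈ T, Sum.inr ⁻¹' t := by
        rwa [← preimage_sUnion]
      obtain ⟨T', hT'sub, hT'fin, hcov⟩ :=
        hK.elim_finite_subcover_image (fun t ht => (ih t ht).2.1) hcover
      obtain ⟨KK, hKKcpt, hKKsub, hKKcov⟩ := hK.finite_compact_cover hT'fin.toFinset
        (fun t => Sum.inr ⁻¹' t)
        (fun t ht => (ih t (hT'sub (hT'fin.mem_toFinset.1 ht))).2.1)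
        (by simpa only [Set.Finite.mem_toFinset] using hcov)
      have hbig : IsCompact (⋃ t ∈ hT'fin.toFinset,
          ((fun x => (p x).1) ⁻¹' KK t ∩ (Sum.inl ⁻¹' t)ᶜ)) := by
        apply hT'fin.toFinset.finite_toSet.isCompact_biUnion
        intro t ht
        have htT : t ∈ T := hT'sub (hT'fin.mem_toFinset.1 ht)
        exact (ih t htT).2.2 (KK t) (hKKsub t) (hKKcpt t)
      refine hbig.of_isClosed_subset ?_ ?_
      · exact (hK.isClosed.preimage hfc).inter h1.isClosed_compl
      · rintro x ⟨hx1, hx2⟩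
        rw [hKKcov] at hx1
        simp only [mem_iUnion, mem_preimage] at hx1 ⊢
        obtain ⟨t, ht, hxt⟩ := hx1
        refine ⟨t, ht, hxt, ?_⟩
        intro hmem
        exact hx2 ⟨t, hT'sub (hT'fin.mem_toFinset.1 ht), hmem⟩
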